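/- A compatible function f: ℤ_p → ℤ_p preserves the Haar measure μ_p if and only if (1) φ_0 is a bijection of the set {0,…,p−1} of residues modulo p, and (2) for every k = 1,2,… and every fixed vector x̄_{k−1} = (x_0,…,x_{k−1}) ∈ {0,…,p−1}^k, the map x_k ↦ φ_k(x̄_{k−1}, x_k) is a bijection of {0,…,p−1}. -/

import Mathlib

open MeasureTheory Function
open scoped ENNReal

variable {p : ℕ} [hp : Fact p.Prime]

noncomputable instance : MeasurableSpace ℤ_[p] := borel _
instance : BorelSpace ℤ_[p] := ⟨rfl⟩

/-- The Haar measure on `ℤ_[p]`, normalized so that `μp p ℤ_[p] = 1`. -/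
noncomputable def μp (p : ℕ) [Fact p.Prime] : Measure ℤ_[p] :=
  Measure.addHaarMeasure ⊤

/-- A function `f : ℤ_[p] → ℤ_[p]` is compatible if it is 1-Lipschitz w.r.t. `|·|_p`. -/
def Compatible (f : ℤ_[p] → ℤ_[p]) : Prop :=
  ∀ x y : ℤ_[p], ‖f x - f y‖ ≤ ‖x - y‖

/-- The `k`-th base-`p` digit of `x ∈ ℤ_[p]`, as a natural number in `{0,…,p-1}`. -/
noncomputable def digitN (x : ℤ_[p]) (k : ℕ) : ℕ := x.appr (k + 1) / p ^ k

/-- The `k`-th base-`p` digit of `x ∈ ℤ_[p]`, as an element of `ZMod p`. -/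
noncomputable def digit (x : ℤ_[p]) (k : ℕ) : ZMod p := (digitN x k : ZMod p)

/-- `f` has coordinate representation given by the family `φ`: the `k`-th digit of `f x`
is `φ k xb x_k`, where `xb = x mod p^k ∈ {0,…,p^k−1}` encodes the digits `(x_0,…,x_{k-1})`
and `x_k` is the `k`-th digit of `x`. -/
def CoordRep (f : ℤ_[p] → ℤ_[p]) (φ : ℕ → ℕ → ZMod p → ZMod p) : Prop :=
  ∀ (x : ℤ_[p]) (k : ℕ), digit (f x) k = φ k (x.appr k) (digit x k)

/-- The reduction of `f` modulo `p^k`, acting on natural-number residues `{0,…,p^k−1}`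
(for `k = k'+1` this is the map `f_{k'}` on `ℤ/p^k ℤ`). -/
noncomputable def red (f : ℤ_[p] → ℤ_[p]) (k : ℕ) (m : ℕ) : ℕ := (f (m : ℤ_[p])).appr k

/-- A map of `ZMod n` is transitive (a single-cycle permutation) iff every point can be
reached from every point by iteration. -/
def IsTransitive {n : ℕ} (g : ZMod n → ZMod n) : Prop :=
  ∀ a b : ZMod n, ∃ s : ℕ, g^[s] a = b

/-- A self-map of the residues `{0,…,N−1}` is transitive (single cycle). -/
def TransitiveOn (g : ℕ → ℕ) (N : ℕ) : Prop :=
  ∀ a, a < N → ∀ b, b < N → ∃ s : ℕ, g^[s] a = b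

/-- `compSeq ψ g xb n = ψ (g^[n-1] xb) ∘ ⋯ ∘ ψ (g xb) ∘ ψ xb`. -/
def compSeq (ψ : ℕ → ZMod p → ZMod p) (g : ℕ → ℕ) (xb : ℕ) : ℕ → ZMod p → ZMod p
  | 0 => id
  | n + 1 => ψ (g^[n] xb) ∘ compSeq ψ g xb n

/-- The permutation `F_{k,xb} = φ_{k,f_{k-1}^{(p^k-1)}(xb)} ∘ ⋯ ∘ φ_{k,xb}` of `ZMod p`. -/
noncomputable def Fperm (φ : ℕ → ℕ → ZMod p → ZMod p) (f : ℤ_[p] → ℤ_[p]) (k xb : ℕ) :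
    ZMod p → ZMod p :=
  compSeq (φ k) (red f k) xb (p ^ k)

lemma tzp_eq_iff (k : ℕ) (x y : ℤ_[p]) :
    PadicInt.toZModPow k x = PadicInt.toZModPow k y ↔ ‖x - y‖ ≤ (p:ℝ)^(-(k:ℤ)) := by
  rw [← sub_eq_zero, ← map_sub, ← RingHom.mem_ker, PadicInt.ker_toZModPow,
    ← PadicInt.norm_le_pow_iff_mem_span_pow]

/-- the ball: preimage of a residue under `toZModPow k`. -/

def Ball (k : ℕ) (a : ZMod (p^k)) : Set ℤ_[p] := (PadicInt.toZModPow k) ⁻¹' {a}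

lemma mem_Ball {k : ℕ} {a : ZMod (p^k)} {x : ℤ_[p]} :
    x ∈ Ball k a ↔ PadicInt.toZModPow k x = a := Iff.rfl

lemma tzp_natCast (k m : ℕ) : PadicInt.toZModPow (p := p) k (m : ℤ_[p]) = (m : ZMod (p^k)) :=
  map_natCast _ m

lemma tzp_val_cast (k : ℕ) (a : ZMod (p^k)) :
    PadicInt.toZModPow (p := p) k ((a.val : ℕ) : ℤ_[p]) = a := by
  rw [tzp_natCast, ZMod.natCast_val, ZMod.cast_id]

lemma Ball_eq_closedBall (k : ℕ) (a : ZMod (p^k)) :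
    Ball k a = Metric.closedBall ((a.val : ℕ) : ℤ_[p]) ((p:ℝ)^(-(k:ℤ))) := by
  ext x
  rw [Metric.mem_closedBall, dist_eq_norm, ← tzp_eq_iff, tzp_val_cast]
  exact Iff.rfl

lemma measurableSet_Ball (k : ℕ) (a : ZMod (p^k)) : MeasurableSet (Ball k a) := by
  rw [Ball_eq_closedBall]; exact measurableSet_closedBall

lemma Ball_disjoint (k : ℕ) : Pairwise (Disjoint on (Ball (p := p) k)) := by
  intro a b hab
  refine Set.disjoint_left.2 fun x hxa hxb => hab ?_
  rw [mem_Ball] at hxa hxb; rw [← hxa, ← hxb]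

lemma iUnion_Ball (k : ℕ) : ⋃ a, Ball (p := p) k a = Set.univ := by
  refine Set.eq_univ_of_forall fun x => Set.mem_iUnion.2 ⟨PadicInt.toZModPow k x, rfl⟩

lemma μp_univ : μp p Set.univ = 1 := by
  have := Measure.addHaarMeasure_self (K₀ := (⊤ : TopologicalSpace.PositiveCompacts ℤ_[p]))
  rwa [TopologicalSpace.PositiveCompacts.coe_top] at this

instance : (μp p).IsAddLeftInvariant := by
  unfold μp; infer_instance

instance : IsFiniteMeasure (μp p) :=
  ⟨by rw [μp_univ]; exact ENNReal.one_lt_top⟩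

lemma μp_Ball_eq (k : ℕ) (a : ZMod (p^k)) : μp p (Ball k a) = μp p (Ball k 0) := by
  have h : ((fun x => ((a.val : ℕ) : ℤ_[p]) + x) ⁻¹' Ball k a) = Ball k 0 := by
    ext x
    simp only [Set.mem_preimage, mem_Ball, map_add, tzp_val_cast]
    constructor
    · intro h; have := add_left_cancel (a := a) (b := PadicInt.toZModPow k x) (c := 0)
      exact this (by simpa using h)
    · intro h; simp [h]
  rw [← measure_preimage_add (μp p) ((a.val : ℕ) : ℤ_[p]) (Ball k a), h]

lemma μp_Ball (k : ℕ) (a : ZMod (p^k)) : μp p (Ball k a) = ((p:ℝ≥0∞)^k)⁻¹ := by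
  have hsum : ∑' (b : ZMod (p^k)), μp p (Ball k b) = 1 := by
    rw [← measure_iUnion (Ball_disjoint k) (measurableSet_Ball k), iUnion_Ball, μp_univ]
  rw [tsum_fintype] at hsum
  have hconst : ∀ b : ZMod (p^k), μp p (Ball k b) = μp p (Ball k 0) := fun b => μp_Ball_eq k b
  rw [Finset.sum_congr rfl (fun b _ => hconst b), Finset.sum_const, Finset.card_univ,
    ZMod.card] at hsum
  have hp0 : ((p:ℝ≥0∞)^k) ≠ 0 := by
    simp [pow_ne_zero, (Nat.cast_ne_zero (R := ℝ≥0∞)).2 hp.out.ne_zero]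
  have hpt : ((p:ℝ≥0∞)^k) ≠ ⊤ := by simp [ENNReal.pow_ne_top, ENNReal.natCast_ne_top]
  rw [μp_Ball_eq k a]
  have : ((p:ℝ≥0∞)^k) * μp p (Ball k 0) = 1 := by
    rw [← hsum]; simp [nsmul_eq_mul]
  calc μp p (Ball k 0) = ((p:ℝ≥0∞)^k)⁻¹ * (((p:ℝ≥0∞)^k) * μp p (Ball k 0)) := by
        rw [← mul_assoc, ENNReal.inv_mul_cancel hp0 hpt, one_mul]
    _ = ((p:ℝ≥0∞)^k)⁻¹ := by rw [this, mul_one]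

/-- reduction of `f` mod `p^k` as a self-map of `ZMod (p^k)`. -/

noncomputable def G (f : ℤ_[p] → ℤ_[p]) (k : ℕ) (a : ZMod (p^k)) : ZMod (p^k) :=
  PadicInt.toZModPow k (f ((a.val : ℕ) : ℤ_[p]))

lemma G_spec {f : ℤ_[p] → ℤ_[p]} (hf : Compatible f) (k : ℕ) (x : ℤ_[p]) :
    PadicInt.toZModPow k (f x) = G f k (PadicInt.toZModPow k x) := by
  rw [G, tzp_eq_iff]
  refine le_trans (hf _ _) ?_
  rw [← tzp_eq_iff, tzp_val_cast]

lemma preimage_Ball {f : ℤ_[p] → ℤ_[p]} (hf : Compatible f) (k : ℕ) (a : ZMod (p^k)) :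
    f ⁻¹' Ball k a = ⋃ b ∈ Finset.univ.filter (fun b => G f k b = a), Ball k b := by
  ext x
  simp only [Set.mem_preimage, mem_Ball, Set.mem_iUnion, Finset.mem_filter, Finset.mem_univ,
    true_and]
  constructor
  · intro h
    exact ⟨PadicInt.toZModPow k x, by rw [← G_spec hf]; exact h, rfl⟩
  · rintro ⟨b, hb, hxb⟩
    rw [G_spec hf, hxb, hb]

lemma μp_preimage_Ball {f : ℤ_[p] → ℤ_[p]} (hf : Compatible f) (k : ℕ) (a : ZMod (p^k)) :
    μp p (f ⁻¹' Ball k a) =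
      (Finset.univ.filter (fun b => G f k b = a)).card * ((p:ℝ≥0∞)^k)⁻¹ := by
  rw [preimage_Ball hf k a,
    measure_biUnion_finset (fun b _ c _ hbc => Ball_disjoint k hbc) (fun b _ => measurableSet_Ball k b)]
  simp [μp_Ball]

lemma measurable_of_compatible {f : ℤ_[p] → ℤ_[p]} (hf : Compatible f) : Measurable f := by
  have : LipschitzWith 1 f := by
    refine LipschitzWith.of_dist_le_mul fun x y => ?_
    rw [dist_eq_norm, dist_eq_norm, NNReal.coe_one, one_mul]
    exact hf x y
  exact this.continuous.measurable

lemma bijective_G_of_measurePreserving {f : ℤ_[p] → ℤ_[p]} (hf : Compatible f)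
    (h : MeasurePreserving f (μp p) (μp p)) (k : ℕ) : Function.Bijective (G f k) := by
  have hcard : ∀ a : ZMod (p^k), (Finset.univ.filter (fun b => G f k b = a)).card = 1 := by
    intro a
    have h1 : μp p (f ⁻¹' Ball k a) = μp p (Ball k a) :=
      h.measure_preimage (measurableSet_Ball k a).nullMeasurableSet
    rw [μp_preimage_Ball hf k a, μp_Ball] at h1
    have hinv0 : ((p:ℝ≥0∞)^k)⁻¹ ≠ 0 := by
      simp [ENNReal.inv_ne_zero, ENNReal.pow_ne_top, ENNReal.natCast_ne_top]
    have hinvt : ((p:ℝ≥0∞)^k)⁻¹ ≠ ⊤ := by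
      simp [ENNReal.inv_ne_top, pow_ne_zero, (Nat.cast_ne_zero (R := ℝ≥0∞)).2 hp.out.ne_zero]
    have : ((Finset.univ.filter (fun b => G f k b = a)).card : ℝ≥0∞) = 1 := by
      have := (ENNReal.mul_left_inj hinv0 hinvt).1 (h1.trans (one_mul _).symm)
      simpa using this
    exact_mod_cast this
  constructor
  · intro b c hbc
    have hb : b ∈ Finset.univ.filter (fun x => G f k x = G f k c) := by
      simp [hbc]
    have hc : c ∈ Finset.univ.filter (fun x => G f k x = G f k c) := by simp
    have := Finset.card_le_one.1 (le_of_eq (hcard (G f k c))) b hb c hc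
    exact this
  · intro a
    obtain ⟨b, hb⟩ := Finset.card_eq_one.1 (hcard a)
    have : b ∈ Finset.univ.filter (fun x => G f k x = a) := by rw [hb]; exact Finset.mem_singleton_self b
    exact ⟨b, (Finset.mem_filter.1 this).2⟩

/-- the collection of all balls, a π-system generating the Borel σ-algebra. -/

def BallSet (p : ℕ) [Fact p.Prime] : Set (Set ℤ_[p]) :=
  {S | ∃ k : ℕ, ∃ a : ZMod (p^k), S = Ball k a}

lemma Ball_subset {k j : ℕ} (hkj : k ≤ j) {a : ZMod (p^k)} {b : ZMod (p^j)} {x : ℤ_[p]}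
    (hxa : x ∈ Ball k a) (hxb : x ∈ Ball j b) : Ball j b ⊆ Ball k a := by
  intro y hy
  rw [mem_Ball] at *
  have h1 : PadicInt.toZModPow j y = PadicInt.toZModPow j x := by rw [hy, hxb]
  rw [tzp_eq_iff] at h1
  have h2 : ‖y - x‖ ≤ (p:ℝ)^(-(k:ℤ)) := by
    refine h1.trans (zpow_le_zpow_right₀ ?_ (by omega))
    exact_mod_cast hp.out.one_lt.le
  rw [← tzp_eq_iff] at h2
  rw [h2, hxa]

lemma isPiSystem_BallSet : IsPiSystem (BallSet p) := by
  rintro S ⟨k, a, rfl⟩ T ⟨j, b, rfl⟩ hne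
  obtain ⟨x, hxa, hxb⟩ := hne
  rcases le_total k j with hkj | hjk
  · have := Ball_subset hkj hxa hxb
    rw [Set.inter_eq_right.2 this]
    exact ⟨j, b, rfl⟩
  · have := Ball_subset hjk hxb hxa
    rw [Set.inter_eq_left.2 this]
    exact ⟨k, a, rfl⟩

lemma generateFrom_BallSet :
    (inferInstance : MeasurableSpace ℤ_[p]) = MeasurableSpace.generateFrom (BallSet p) := by
  refine le_antisymm ?_ (MeasurableSpace.generateFrom_le ?_)
  · -- borel ≤ generateFrom
    change borel ℤ_[p] ≤ _
    rw [borel]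
    refine MeasurableSpace.generateFrom_le fun U hU => ?_
    replace hU : IsOpen U := hU
    have hrepr : U = ⋃ i : Σ k : ℕ, ZMod (p^k), ⋃ (_ : Ball i.1 i.2 ⊆ U), Ball i.1 i.2 := by
      apply Set.Subset.antisymm
      · intro x hx
        obtain ⟨ε, hε, hball⟩ := Metric.isOpen_iff.1 hU x hx
        obtain ⟨k, hk⟩ : ∃ k : ℕ, ((p:ℝ)⁻¹)^k < ε := by
          refine exists_pow_lt_of_lt_one hε ?_
          rw [inv_lt_one_iff₀]
          right; exact_mod_cast hp.out.one_lt
        have hsub : Ball k (PadicInt.toZModPow k x) ⊆ U := by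
          intro y hy
          apply hball
          rw [Metric.mem_ball, dist_eq_norm]
          have : ‖y - x‖ ≤ (p:ℝ)^(-(k:ℤ)) := by
            rw [← tzp_eq_iff]; exact hy
          refine lt_of_le_of_lt this ?_
          rwa [zpow_neg, zpow_natCast, ← inv_pow]
        exact Set.mem_iUnion.2 ⟨⟨k, PadicInt.toZModPow k x⟩, Set.mem_iUnion.2 ⟨hsub, rfl⟩⟩
      · intro x hx
        obtain ⟨i, hi⟩ := Set.mem_iUnion.1 hx
        obtain ⟨hsub, hmem⟩ := Set.mem_iUnion.1 hi
        exact hsub hmem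
    rw [hrepr]
    refine MeasurableSet.iUnion fun i => MeasurableSet.iUnion fun _ =>
      MeasurableSpace.measurableSet_generateFrom ⟨i.1, i.2, rfl⟩
  · rintro S ⟨k, a, rfl⟩
    exact measurableSet_Ball k a

lemma measurePreserving_of_bijective_G {f : ℤ_[p] → ℤ_[p]} (hf : Compatible f)
    (h : ∀ k, Function.Bijective (G f k)) : MeasurePreserving f (μp p) (μp p) := by
  have hmeas := measurable_of_compatible hf
  refine ⟨hmeas, ?_⟩
  have hfin : IsFiniteMeasure ((μp p).map f) :=
    ⟨by rw [Measure.map_apply hmeas MeasurableSet.univ, Set.preimage_univ]; exact measure_lt_top _ _⟩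
  refine ext_of_generate_finite (BallSet p) generateFrom_BallSet isPiSystem_BallSet ?_ ?_
  · rintro S ⟨k, a, rfl⟩
    rw [Measure.map_apply hmeas (measurableSet_Ball k a), μp_preimage_Ball hf k a, μp_Ball]
    have hcard : (Finset.univ.filter (fun b => G f k b = a)).card = 1 := by
      obtain ⟨b, hb⟩ := (h k).2 a
      rw [Finset.card_eq_one]
      refine ⟨b, Finset.ext fun c => ?_⟩
      simp only [Finset.mem_filter, Finset.mem_univ, true_and, Finset.mem_singleton]
      constructor
      · intro hc; exact (h k).1 (hc.trans hb.symm)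
      · rintro rfl; exact hb
    rw [hcard]; simp
  · rw [Measure.map_apply hmeas MeasurableSet.univ, Set.preimage_univ]

lemma tzp_eq_appr (k : ℕ) (x : ℤ_[p]) :
    PadicInt.toZModPow k x = ((x.appr k : ZMod (p^k))) := rfl

lemma appr_eq_val (k : ℕ) (x : ℤ_[p]) : x.appr k = (PadicInt.toZModPow k x).val := by
  rw [tzp_eq_appr, ZMod.val_natCast_of_lt (PadicInt.appr_lt x k)]

lemma tzp_eq_iff_appr (k : ℕ) (x y : ℤ_[p]) :
    PadicInt.toZModPow k x = PadicInt.toZModPow k y ↔ x.appr k = y.appr k := by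
  constructor
  · intro h; rw [appr_eq_val, appr_eq_val, h]
  · intro h; rw [tzp_eq_appr, tzp_eq_appr, h]

lemma digitN_lt (x : ℤ_[p]) (k : ℕ) : digitN x k < p := by
  have h := PadicInt.appr_lt x (k + 1)
  rw [digitN, Nat.div_lt_iff_lt_mul (pow_pos hp.out.pos k)]
  rw [pow_succ] at h
  linarith [h]

lemma appr_succ (x : ℤ_[p]) (k : ℕ) :
    x.appr (k + 1) = x.appr k + p ^ k * digitN x k := by
  have hd := PadicInt.dvd_appr_sub_appr x k (k+1) (Nat.le_succ k)
  have hm : x.appr k ≤ x.appr (k + 1) := PadicInt.appr_mono x (Nat.le_succ k)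
  have hmod : x.appr (k+1) % p ^ k = x.appr k := by
    obtain ⟨c, hc⟩ := hd
    have : x.appr (k+1) = x.appr k + p ^ k * c := by omega
    rw [this, Nat.add_mul_mod_self_left, Nat.mod_eq_of_lt (PadicInt.appr_lt x k)]
  conv_lhs => rw [← Nat.div_add_mod (x.appr (k+1)) (p ^ k)]
  rw [hmod, digitN]
  ring

lemma appr_mod (x : ℤ_[p]) (k : ℕ) : x.appr k = x.appr (k + 1) % p ^ k := by
  rw [appr_succ, Nat.add_mul_mod_self_left, Nat.mod_eq_of_lt (PadicInt.appr_lt x k)]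

lemma digit_inj {x y : ℤ_[p]} {k : ℕ} (h : digit x k = digit y k) : digitN x k = digitN y k := by
  have hx := digitN_lt x k
  have hy := digitN_lt y k
  rw [digit, digit] at h
  have := congrArg ZMod.val h
  rwa [ZMod.val_natCast_of_lt hx, ZMod.val_natCast_of_lt hy] at this

lemma appr_natCast (k N : ℕ) (h : N < p ^ k) : ((N : ℤ_[p])).appr k = N := by
  rw [appr_eq_val, tzp_natCast, ZMod.val_natCast_of_lt h]

lemma val_lt_padic (c : ZMod p) : c.val < p := ZMod.val_lt c

lemma N_lt (k xb : ℕ) (hxb : xb < p ^ k) (c : ZMod p) : xb + p ^ k * c.val < p ^ (k + 1) := by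
  have h1 : p ^ k * c.val ≤ p ^ k * (p - 1) := Nat.mul_le_mul_left _ (by have := ZMod.val_lt c; omega)
  have h2 : p ^ (k+1) = p ^ k * (p - 1) + p ^ k := by
    rw [pow_succ]
    have h3 : p ^ k * p = p ^ k * ((p - 1) + 1) := by rw [Nat.sub_add_cancel hp.out.pos]
    rw [h3, Nat.mul_add, mul_one]
  omega

lemma digit_natCast (k xb : ℕ) (hxb : xb < p ^ k) (c : ZMod p) :
    (((xb + p ^ k * c.val : ℕ) : ℤ_[p])).appr k = xb ∧
    digit (((xb + p ^ k * c.val : ℕ) : ℤ_[p])) k = c := by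
  have hN := N_lt k xb hxb c
  have happr : (((xb + p ^ k * c.val : ℕ) : ℤ_[p])).appr (k+1) = xb + p ^ k * c.val :=
    appr_natCast (k+1) _ hN
  constructor
  · rw [appr_mod, happr, Nat.add_mul_mod_self_left, Nat.mod_eq_of_lt hxb]
  · rw [digit, digitN, happr, Nat.add_mul_div_left _ _ (pow_pos hp.out.pos k),
      Nat.div_eq_of_lt hxb, zero_add, ZMod.natCast_val, ZMod.cast_id]

lemma bijective_G_iff_phi (f : ℤ_[p] → ℤ_[p]) (φ : ℕ → ℕ → ZMod p → ZMod p)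
    (hf : Compatible f) (hφ : CoordRep f φ) :
    (∀ k, Function.Bijective (G f k)) ↔
      ∀ k, ∀ xb, xb < p ^ k → Function.Bijective (φ k xb) := by
  constructor
  · intro h k xb hxb
    rw [← Finite.injective_iff_bijective]
    intro c d hcd
    set x : ℤ_[p] := ((xb + p ^ k * c.val : ℕ) : ℤ_[p]) with hxdef
    set y : ℤ_[p] := ((xb + p ^ k * d.val : ℕ) : ℤ_[p]) with hydef
    obtain ⟨hxk, hxd⟩ := digit_natCast k xb hxb c
    obtain ⟨hyk, hyd⟩ := digit_natCast k xb hxb d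
    -- k-th coordinates of f x, f y agree
    have hfd : digit (f x) k = digit (f y) k := by
      rw [hφ x k, hφ y k, hxk, hyk, hxd, hyd, hcd]
    -- lower coordinates agree
    have htk : PadicInt.toZModPow k x = PadicInt.toZModPow k y := by
      rw [tzp_eq_iff_appr, hxk, hyk]
    have hfk : (f x).appr k = (f y).appr k := by
      rw [← tzp_eq_iff_appr, G_spec hf, G_spec hf, htk]
    have hfk1 : (f x).appr (k+1) = (f y).appr (k+1) := by
      rw [appr_succ, appr_succ, hfk, digit_inj hfd]
    have htk1 : PadicInt.toZModPow (k+1) x = PadicInt.toZModPow (k+1) y := by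
      apply (h (k+1)).1
      rw [← G_spec hf, ← G_spec hf, tzp_eq_iff_appr]
      exact hfk1
    rw [tzp_eq_iff_appr] at htk1
    rw [appr_natCast (k+1) _ (N_lt k xb hxb c), appr_natCast (k+1) _ (N_lt k xb hxb d)] at htk1
    have : c.val = d.val := by
      have hpk : 0 < p ^ k := pow_pos hp.out.pos k
      have h4 : p ^ k * c.val = p ^ k * d.val := by omega
      exact Nat.eq_of_mul_eq_mul_left hpk h4
    exact ZMod.val_injective _ this
  · intro h k
    induction k with
    | zero =>
      have hs : ∀ a b : ZMod (p ^ 0), a = b := fun a b => by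
        apply ZMod.val_injective
        have ha := ZMod.val_lt a
        have hb := ZMod.val_lt b
        have hone : p ^ 0 = 1 := pow_zero p
        omega
      exact ⟨fun a b _ => hs a b, fun a => ⟨a, hs _ _⟩⟩
    | succ k ih =>
      rw [← Finite.injective_iff_bijective]
      intro A B hAB
      set x : ℤ_[p] := ((A.val : ℕ) : ℤ_[p]) with hxdef
      set y : ℤ_[p] := ((B.val : ℕ) : ℤ_[p]) with hydef
      have hxA : PadicInt.toZModPow (k+1) x = A := tzp_val_cast _ _
      have hyB : PadicInt.toZModPow (k+1) y = B := tzp_val_cast _ _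
      have hfxy : PadicInt.toZModPow (k+1) (f x) = PadicInt.toZModPow (k+1) (f y) := by
        rw [G_spec hf, G_spec hf, hxA, hyB]
        exact hAB
      have hfk1 : (f x).appr (k+1) = (f y).appr (k+1) := (tzp_eq_iff_appr _ _ _).1 hfxy
      have hfk : PadicInt.toZModPow k (f x) = PadicInt.toZModPow k (f y) := by
        rw [← PadicInt.cast_toZModPow k (k+1) (Nat.le_succ k) (f x),
          ← PadicInt.cast_toZModPow k (k+1) (Nat.le_succ k) (f y), hfxy]
      have htk : PadicInt.toZModPow k x = PadicInt.toZModPow k y := by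
        apply ih.1
        rw [← G_spec hf, ← G_spec hf]
        exact hfk
      have hak : x.appr k = y.appr k := (tzp_eq_iff_appr _ _ _).1 htk
      have hfd : digit (f x) k = digit (f y) k := by
        rw [digit, digit, digitN, digitN, hfk1]
      have hdig : digit x k = digit y k := by
        have hinj := (h k (x.appr k) (PadicInt.appr_lt x k)).1
        apply hinj
        rw [← hφ x k]
        conv_rhs => rw [hak]
        rw [← hφ y k]
        exact hfd
      have hak1 : x.appr (k+1) = y.appr (k+1) := by
        rw [appr_succ, appr_succ, hak, digit_inj hdig]
      rw [← hxA, ← hyB, tzp_eq_iff_appr]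
      exact hak1

/-- A compatible `f : ℤ_[p] → ℤ_[p]` preserves the Haar measure `μp p` iff `φ_0` is a
bijection of the residues mod `p` and each `φ_{k,x̄}` (`k ≥ 1`, `x̄ < p^k`) is a bijection
of the residues mod `p`. -/
theorem measurePreserving_iff_coordinate_bijective
    (f : ℤ_[p] → ℤ_[p]) (φ : ℕ → ℕ → ZMod p → ZMod p)
    (hf : Compatible f) (hφ : CoordRep f φ) :
    MeasurePreserving f (μp p) (μp p) ↔
      (Function.Bijective (φ 0 0) ∧
        ∀ k, 1 ≤ k → ∀ xb, xb < p ^ k → Function.Bijective (φ k xb)) := by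
  have key1 : MeasurePreserving f (μp p) (μp p) ↔ ∀ k, Function.Bijective (G f k) :=
    ⟨fun h k => bijective_G_of_measurePreserving hf h k, measurePreserving_of_bijective_G hf⟩
  rw [key1, bijective_G_iff_phi f φ hf hφ]
  constructor
  · intro h
    refine ⟨h 0 0 (by rw [pow_zero]; omega), fun k _ xb hxb => h k xb hxb⟩
  · rintro ⟨h0, h1⟩ k xb hxb
    cases k with
    | zero =>
      have : xb = 0 := by rw [pow_zero] at hxb; omega
      rw [this]; exact h0
    | succ k => exact h1 (k+1) (by omega) xb hxb
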